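/- Let F be an algebraically closed field of odd characteristic p. Then SL(2n+1, F) is not acceptable for any n ≥ 1. -/

import Mathlib

open Matrix

namespace SLNA

variable {F : Type} [Field F]

/-- Upper-triangular unipotent with entries (0,2)=a, (1,2)=b. -/
def S1 (a b : F) : Matrix (Fin 3) (Fin 3) F := !![1,0,a; 0,1,b; 0,0,1]
/-- Upper-triangular unipotent with entries (0,1)=a, (0,2)=b. -/
def S2 (a b : F) : Matrix (Fin 3) (Fin 3) F := !![1,a,b; 0,1,0; 0,0,1]

lemma S1_mul (a b a' b' : F) : S1 a b * S1 a' b' = S1 (a+a') (b+b') := by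
  ext i j
  fin_cases i <;> fin_cases j <;> simp [S1, Matrix.mul_apply, Fin.sum_univ_three, Matrix.vecHead, Matrix.vecTail] <;> ring

lemma S2_mul (a b a' b' : F) : S2 a b * S2 a' b' = S2 (a+a') (b+b') := by
  ext i j
  fin_cases i <;> fin_cases j <;> simp [S2, Matrix.mul_apply, Fin.sum_univ_three, Matrix.vecHead, Matrix.vecTail] <;> ring

lemma S1_zero : S1 (0:F) 0 = 1 := by
  ext i j
  fin_cases i <;> fin_cases j <;> simp [S1, Matrix.one_apply, Matrix.vecHead, Matrix.vecTail]

lemma S2_zero : S2 (0:F) 0 = 1 := by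
  ext i j
  fin_cases i <;> fin_cases j <;> simp [S2, Matrix.one_apply, Matrix.vecHead, Matrix.vecTail]

lemma S1_std (a b : F) :
    S1 a b = 1 + single 0 2 a + single 1 2 b := by
  ext i j
  fin_cases i <;> fin_cases j <;>
    simp [S1, Matrix.one_apply, Matrix.single, Fin.ext_iff, Matrix.vecHead, Matrix.vecTail]

lemma S2_std (a b : F) :
    S2 a b = 1 + single 0 1 a + single 0 2 b := by
  ext i j
  fin_cases i <;> fin_cases j <;>
    simp [S2, Matrix.one_apply, Matrix.single, Fin.ext_iff, Matrix.vecHead, Matrix.vecTail]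

lemma det_S1 (a b : F) : (S1 a b).det = 1 := by
  simp [S1, Matrix.det_fin_three, Matrix.vecHead, Matrix.vecTail]

lemma det_S2 (a b : F) : (S2 a b).det = 1 := by
  simp [S2, Matrix.det_fin_three, Matrix.vecHead, Matrix.vecTail]

lemma key1 (a b : F) :
    S1 a b * !![a,1,0; b,0,0; 0,a,b] = !![a,1,0; b,0,0; 0,a,b] * S2 a b := by
  ext i j
  fin_cases i <;> fin_cases j <;>
    simp [S1, S2, Matrix.mul_apply, Fin.sum_univ_three, Matrix.vecHead, Matrix.vecTail] <;> ring

lemma key2 (a : F) :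
    S1 a 0 * !![a,0,0; 0,0,1; 0,a,0] = !![a,0,0; 0,0,1; 0,a,0] * S2 a 0 := by
  ext i j
  fin_cases i <;> fin_cases j <;>
    simp [S1, S2, Matrix.mul_apply, Fin.sum_univ_three, Matrix.vecHead, Matrix.vecTail] <;> ring

lemma det_h1 (a b : F) : (!![a,1,0; b,0,0; 0,a,b]).det = -(b*b) := by
  simp [Matrix.det_fin_three, Matrix.vecHead, Matrix.vecTail]

lemma det_h2 (a : F) : (!![a,0,0; 0,0,1; 0,a,0]).det = -(a*a) := by
  simp [Matrix.det_fin_three, Matrix.vecHead, Matrix.vecTail]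


section Emb

variable {k : ℕ} {γ : Type} [Fintype γ] [DecidableEq γ]

/-- Embed a 3×3 matrix as a block-diagonal matrix (with identity in the other block). -/
def Emb (e : (Fin 3 ⊕ Fin k) ≃ γ) (S : Matrix (Fin 3) (Fin 3) F) : Matrix γ γ F :=
  (reindex e e) (fromBlocks S 0 0 1)

lemma Emb_mul (e : (Fin 3 ⊕ Fin k) ≃ γ) (S T : Matrix (Fin 3) (Fin 3) F) :
    Emb e (S * T) = Emb e S * Emb e T := by
  simp only [Emb, Matrix.reindex_apply, Matrix.submatrix_mul_equiv,
    Matrix.fromBlocks_multiply]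
  congr 1 <;> simp

lemma Emb_one (e : (Fin 3 ⊕ Fin k) ≃ γ) : Emb e (1 : Matrix (Fin 3) (Fin 3) F) = 1 := by
  simp [Emb, Matrix.fromBlocks_one]

lemma Emb_det (e : (Fin 3 ⊕ Fin k) ≃ γ) (S : Matrix (Fin 3) (Fin 3) F) :
    (Emb e S).det = S.det := by
  simp [Emb, Matrix.det_fromBlocks_zero₂₁]

lemma Emb_std (e : (Fin 3 ⊕ Fin k) ≃ γ) (i j : Fin 3) (a : F) :
    Emb e (1 + single i j a) =
      1 + single (e (Sum.inl i)) (e (Sum.inl j)) a := by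
  have h0 : (reindex e e) (fromBlocks (single i j a) 0 0 (0 : Matrix (Fin k) (Fin k) F))
      = single (e (Sum.inl i)) (e (Sum.inl j)) a := by
    ext r c
    simp only [Matrix.reindex_apply, Matrix.submatrix_apply]
    rcases hr : e.symm r with r' | r' <;> rcases hc : e.symm c with c' | c' <;>
      rw [Equiv.symm_apply_eq] at hr hc <;> subst hr <;> subst hc <;>
      simp [Matrix.fromBlocks, Matrix.single, e.injective.eq_iff]
  have : fromBlocks (1 + single i j a) 0 0 (1 : Matrix (Fin k) (Fin k) F)
      = fromBlocks 1 0 0 1 + fromBlocks (single i j a) 0 0 0 := by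
    rw [Matrix.fromBlocks_add]
    simp
  have hadd : ∀ A B : Matrix (Fin 3 ⊕ Fin k) (Fin 3 ⊕ Fin k) F,
      (reindex e e) (A + B) = reindex e e A + reindex e e B := fun A B => by
    ext r c; simp
  rw [Emb, this, hadd, h0, Matrix.fromBlocks_one]
  simp

end Emb


section Phi

variable {k : ℕ} {γ : Type} [Fintype γ] [DecidableEq γ] {A : Type} [AddMonoid A]

/-- First family of representations. -/
def phi1 (e : (Fin 3 ⊕ Fin k) ≃ γ) (f₁ f₂ : A →+ F) :
    Multiplicative A →* Matrix.SpecialLinearGroup γ F where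
  toFun x := ⟨Emb e (S1 (f₁ x.toAdd) (f₂ x.toAdd)), by rw [Emb_det, det_S1]⟩
  map_one' := Subtype.ext <| by
    show Emb e (S1 (f₁ (Multiplicative.toAdd 1)) (f₂ (Multiplicative.toAdd 1))) = _
    rw [toAdd_one, map_zero, map_zero, S1_zero, Emb_one]; rfl
  map_mul' x y := Subtype.ext <| by
    show Emb e (S1 (f₁ (x * y).toAdd) (f₂ (x * y).toAdd)) = _
    rw [toAdd_mul, map_add, map_add, ← S1_mul, Emb_mul]; rfl

/-- Second family of representations. -/
def phi2 (e : (Fin 3 ⊕ Fin k) ≃ γ) (f₁ f₂ : A →+ F) :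
    Multiplicative A →* Matrix.SpecialLinearGroup γ F where
  toFun x := ⟨Emb e (S2 (f₁ x.toAdd) (f₂ x.toAdd)), by rw [Emb_det, det_S2]⟩
  map_one' := Subtype.ext <| by
    show Emb e (S2 (f₁ (Multiplicative.toAdd 1)) (f₂ (Multiplicative.toAdd 1))) = _
    rw [toAdd_one, map_zero, map_zero, S2_zero, Emb_one]; rfl
  map_mul' x y := Subtype.ext <| by
    show Emb e (S2 (f₁ (x * y).toAdd) (f₂ (x * y).toAdd)) = _
    rw [toAdd_mul, map_add, map_add, ← S2_mul, Emb_mul]; rfl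

end Phi

lemma conj_of_comm {G : Type*} [Group G] {A B C : G} (h : A * B = B * C) :
    B⁻¹ * A * (B⁻¹)⁻¹ = C := by
  rw [inv_inv, mul_assoc, h, ← mul_assoc, inv_mul_cancel, one_mul]

end SLNA

open SLNA Matrix in
theorem SLNA.SL_odd_not_acceptable_aux (F : Type) [Field F] [IsAlgClosed F] (p : ℕ) [Fact p.Prime]
    [CharP F p] (hp : p ≠ 2) (n : ℕ) (hn : 1 ≤ n) :
    ¬ (∀ (H : Type) (_ : Group H) (_ : Finite H)
        (φ₁ φ₂ : H →* Matrix.SpecialLinearGroup (Fin (2 * n + 1)) F),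
      (∀ h : H, ∃ g, g * φ₁ h * g⁻¹ = φ₂ h) →
      ∃ g, ∀ h : H, g * φ₁ h * g⁻¹ = φ₂ h) := by
  intro hacc
  have hNZ : NeZero p := ⟨(Fact.out : p.Prime).ne_zero⟩
  have h3 : 3 + (2 * n - 2) = 2 * n + 1 := by omega
  let e : (Fin 3 ⊕ Fin (2 * n - 2)) ≃ Fin (2 * n + 1) := finSumFinEquiv.trans (finCongr h3)
  let f : ZMod p →+* F := ZMod.castHom dvd_rfl F
  let f₁ : ZMod p × ZMod p →+ F := f.toAddMonoidHom.comp (AddMonoidHom.fst _ _)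
  let f₂ : ZMod p × ZMod p →+ F := f.toAddMonoidHom.comp (AddMonoidHom.snd _ _)
  -- the two element-conjugate homomorphisms
  set Φ₁ := SLNA.phi1 e f₁ f₂ with hΦ₁
  set Φ₂ := SLNA.phi2 e f₁ f₂ with hΦ₂
  have hcard : Fintype.card (Fin (2 * n + 1)) = 2 * n + 1 := Fintype.card_fin _
  -- element conjugacy
  have helem : ∀ x : Multiplicative (ZMod p × ZMod p),
      ∃ g, g * Φ₁ x * g⁻¹ = Φ₂ x := by
    intro x
    set a : F := f₁ x.toAdd with ha'
    set b : F := f₂ x.toAdd with hb'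
    have hv1 : (Φ₁ x).val = Emb e (S1 a b) := rfl
    have hv2 : (Φ₂ x).val = Emb e (S2 a b) := rfl
    by_cases hb : b = 0
    · by_cases hac : a = 0
      · refine ⟨1, ?_⟩
        rw [one_mul, inv_one, mul_one]
        apply Subtype.ext
        rw [hv1, hv2, hb, hac, S1_zero, S2_zero]
      · -- a ≠ 0, b = 0 : conjugate by !![a,0,0;0,0,1;0,a,0]
        obtain ⟨c, hc⟩ := IsAlgClosed.exists_pow_nat_eq (k := F) (-(a * a))⁻¹
          (n := 2 * n + 1) (by omega)
        have hdet : (c • Emb e !![a,0,0; 0,0,1; 0,a,0]).det = 1 := by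
          rw [Matrix.det_smul, hcard, Emb_det, det_h2, hc,
            inv_mul_cancel₀ (by simpa using hac)]
        refine ⟨(⟨_, hdet⟩ : Matrix.SpecialLinearGroup (Fin (2 * n + 1)) F)⁻¹,
          conj_of_comm (Subtype.ext ?_)⟩
        show Emb e (S1 a b) * (c • Emb e _) = (c • Emb e _) * Emb e (S2 a b)
        rw [mul_smul_comm, smul_mul_assoc, ← Emb_mul, ← Emb_mul, hb, key2]
    · -- b ≠ 0 : conjugate by !![a,1,0;b,0,0;0,a,b]
      obtain ⟨c, hc⟩ := IsAlgClosed.exists_pow_nat_eq (k := F) (-(b * b))⁻¹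
        (n := 2 * n + 1) (by omega)
      have hdet : (c • Emb e !![a,1,0; b,0,0; 0,a,b]).det = 1 := by
        rw [Matrix.det_smul, hcard, Emb_det, det_h1, hc,
          inv_mul_cancel₀ (by simpa using hb)]
      refine ⟨(⟨_, hdet⟩ : Matrix.SpecialLinearGroup (Fin (2 * n + 1)) F)⁻¹,
        conj_of_comm (Subtype.ext ?_)⟩
      show Emb e (S1 a b) * (c • Emb e _) = (c • Emb e _) * Emb e (S2 a b)
      rw [mul_smul_comm, smul_mul_assoc, ← Emb_mul, ← Emb_mul, key1]
  obtain ⟨g, hg⟩ := hacc (Multiplicative (ZMod p × ZMod p)) inferInstance inferInstance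
    Φ₁ Φ₂ helem
  -- extract the two commutation relations
  set ι : Fin 3 → Fin (2 * n + 1) := fun i => e (Sum.inl i) with hι
  have hι01 : ι 0 ≠ ι 1 := fun h => by simpa using e.injective h
  have hι10 : ι 1 ≠ ι 0 := hι01.symm
  have hstd : ∀ (i j : Fin 3) (x : Multiplicative (ZMod p × ZMod p))
      (S : Matrix (Fin 3) (Fin 3) F),
      S = 1 + single i j 1 → Emb e S = 1 + single (ι i) (ι j) 1 := by
    intro i j x S hS
    rw [hS, Emb_std]
  -- values at the two generators
  have hone : f (1 : ZMod p) = 1 := map_one f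
  have hzero : f (0 : ZMod p) = 0 := map_zero f
  let x₁ : Multiplicative (ZMod p × ZMod p) := Multiplicative.ofAdd (1, 0)
  let x₂ : Multiplicative (ZMod p × ZMod p) := Multiplicative.ofAdd (0, 1)
  have hv11 : (Φ₁ x₁).val = 1 + single (ι 0) (ι 2) 1 := by
    show Emb e (S1 (f 1) (f 0)) = _
    rw [hone, hzero, ← Emb_std]
    congr 1
    rw [S1_std]; simp
  have hv21 : (Φ₂ x₁).val = 1 + single (ι 0) (ι 1) 1 := by
    show Emb e (S2 (f 1) (f 0)) = _
    rw [hone, hzero, ← Emb_std]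
    congr 1
    rw [S2_std]; simp
  have hv12 : (Φ₁ x₂).val = 1 + single (ι 1) (ι 2) 1 := by
    show Emb e (S1 (f 0) (f 1)) = _
    rw [hone, hzero, ← Emb_std]
    congr 1
    rw [S1_std]; simp
  have hv22 : (Φ₂ x₂).val = 1 + single (ι 0) (ι 2) 1 := by
    show Emb e (S2 (f 0) (f 1)) = _
    rw [hone, hzero, ← Emb_std]
    congr 1
    rw [S2_std]; simp
  have hcomm : ∀ x : Multiplicative (ZMod p × ZMod p),
      g.val * (Φ₁ x).val = (Φ₂ x).val * g.val := by
    intro x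
    have h1 : g * Φ₁ x = Φ₂ x * g := by
      have := hg x
      calc g * Φ₁ x = g * Φ₁ x * g⁻¹ * g := by group
        _ = Φ₂ x * g := by rw [this]
    have := congrArg Subtype.val h1
    simpa using this
  have heq1 : g.val * single (ι 0) (ι 2) (1 : F)
      = single (ι 0) (ι 1) 1 * g.val := by
    have := hcomm x₁
    rw [hv11, hv21, mul_add, add_mul, mul_one, one_mul] at this
    exact add_left_cancel this
  have heq2 : g.val * single (ι 1) (ι 2) (1 : F)
      = single (ι 0) (ι 2) 1 * g.val := by
    have := hcomm x₂
    rw [hv12, hv22, mul_add, add_mul, mul_one, one_mul] at this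
    exact add_left_cancel this
  -- columns ι0 and ι1 of g are supported at row ι0
  have hcol0 : ∀ r, r ≠ ι 0 → g.val r (ι 0) = 0 := by
    intro r hr
    have := congrFun (congrFun heq1 r) (ι 2)
    rw [Matrix.mul_single_apply_same,
      Matrix.single_mul_apply_of_ne _ _ _ _ _ hr] at this
    simpa using this
  have hcol1 : ∀ r, r ≠ ι 0 → g.val r (ι 1) = 0 := by
    intro r hr
    have := congrFun (congrFun heq2 r) (ι 2)
    rw [Matrix.mul_single_apply_same,
      Matrix.single_mul_apply_of_ne _ _ _ _ _ hr] at this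
    simpa using this
  -- det contradiction via the transpose
  set T := g.valᵀ with hT
  have hdetT : T.det = 1 := by rw [hT, Matrix.det_transpose]; exact g.2
  have hrow0 : ∀ c, c ≠ ι 0 → T (ι 0) c = 0 := fun c hc => hcol0 c hc
  have hrow1 : ∀ c, c ≠ ι 0 → T (ι 1) c = 0 := fun c hc => hcol1 c hc
  by_cases h00 : T (ι 0) (ι 0) = 0
  · have : T.det = 0 := Matrix.det_eq_zero_of_row_eq_zero (ι 0) fun c => by
      by_cases hc : c = ι 0
      · rw [hc]; exact h00
      · exact hrow0 c hc
    rw [hdetT] at this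
    exact one_ne_zero this
  · set c0 : F := -(T (ι 1) (ι 0) / T (ι 0) (ι 0)) with hc0
    have hupd : (Matrix.updateRow T (ι 1) (T (ι 1) + c0 • T (ι 0))).det = T.det :=
      Matrix.det_updateRow_add_smul_self T hι10 c0
    have hzero' : (Matrix.updateRow T (ι 1) (T (ι 1) + c0 • T (ι 0))).det = 0 := by
      apply Matrix.det_eq_zero_of_row_eq_zero (ι 1)
      intro cc
      rw [Matrix.updateRow_self]
      by_cases hcc : cc = ι 0
      · rw [hcc]
        simp only [Pi.add_apply, Pi.smul_apply, smul_eq_mul, hc0]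
        field_simp
        ring
      · simp [hrow1 cc hcc, hrow0 cc hcc]
    rw [hupd, hdetT] at hzero'
    exact one_ne_zero hzero'

/-- A group `G` is *acceptable* if for every finite group `H`, any two element-conjugate
homomorphisms `H → G` are globally conjugate. -/
def IsAcceptable (G : Type*) [Group G] : Prop :=
  ∀ (H : Type) (_ : Group H) (_ : Finite H) (φ₁ φ₂ : H →* G),
    (∀ h : H, ∃ g : G, g * φ₁ h * g⁻¹ = φ₂ h) →
    ∃ g : G, ∀ h : H, g * φ₁ h * g⁻¹ = φ₂ h
theorem SL_odd_not_acceptable (F : Type) [Field F] [IsAlgClosed F] (p : ℕ) [Fact p.Prime]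
    [CharP F p] (hp : p ≠ 2) (n : ℕ) (hn : 1 ≤ n) :
    ¬ IsAcceptable (Matrix.SpecialLinearGroup (Fin (2 * n + 1)) F) := by
  exact SLNA.SL_odd_not_acceptable_aux F p hp n hn
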